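/- arXiv:2104.09733 — 5 statements merged into one kernel-verified Lean document; each statement's English description precedes it below -/
import Mathlib

section
/- For any two landmarks r, r' in R, the distance in the meta-graph equals the distance in the original graph: d_M(r,r') = d_G(r,r'). -/
open SimpleGraph

variable {V : Type}

/-- `(r, d_G(u,r))` is an entry of the path labelling `L(u)`: some shortest
`u`-`r` path meets the landmark set `R` only in `r`. -/
def LEntry (G : SimpleGraph V) (R : Set V) (u r : V) : Prop :=
  ∃ w : G.Walk u r, w.length = G.dist u r ∧ ∀ x ∈ w.support, x ∈ R → x = r

/-- `(r, r')` is an edge of the meta-graph `M`: some shortest `r`-`r'` path in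
`G` contains no landmark other than `r` and `r'`. Its weight is `d_G(r,r')`. -/
def MEdge (G : SimpleGraph V) (R : Set V) (r r' : V) : Prop :=
  r ≠ r' ∧ ∃ w : G.Walk r r', w.length = G.dist r r' ∧
    ∀ x ∈ w.support, x ∈ R → x = r ∨ x = r'

/-- There is a walk in the weighted meta-graph from `r` to `r'` of total
weight `n` (each meta-edge `(s,s')` having weight `d_G(s,s')`). -/
inductive MWalkLen (G : SimpleGraph V) (R : Set V) : V → V → ℕ → Prop
  | nil (r : V) : MWalkLen G R r r 0
  | cons {r r' r'' : V} {n : ℕ} (h : MEdge G R r r') (hw : MWalkLen G R r' r'' n) :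
      MWalkLen G R r r'' (G.dist r r' + n)

/-- Weighted shortest-path distance `d_M` in the meta-graph (`⊤` if unreachable). -/
noncomputable def dM (G : SimpleGraph V) (R : Set V) (r r' : V) : ℕ∞ :=
  sInf {x : ℕ∞ | ∃ n : ℕ, MWalkLen G R r r' n ∧ x = (n : ℕ∞)}

/-- The sketch upper bound
`d⊤_uv = min {δ_ur + d_M(r,r') + δ_vr' : (r,δ_ur) ∈ L(u), (r',δ_vr') ∈ L(v)}`. -/
noncomputable def dTop (G : SimpleGraph V) (R : Set V) (u v : V) : ℕ∞ :=
  sInf {x : ℕ∞ | ∃ r r', r ∈ R ∧ r' ∈ R ∧ LEntry G R u r ∧ LEntry G R v r' ∧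
    x = (G.dist u r : ℕ∞) + dM G R r r' + (G.dist v r' : ℕ∞)}

lemma lower (G : SimpleGraph V) (hG : G.Connected) (R : Set V) {r r' : V} {n : ℕ}
    (h : MWalkLen G R r r' n) : G.dist r r' ≤ n := by
  induction h with
  | nil r => simp
  | cons h hw ih =>
      exact le_trans hG.dist_triangle (Nat.add_le_add_left ih _)

lemma split (G : SimpleGraph V) (R : Set V) {r r' : V} (hr' : r' ∈ R) (hne : r ≠ r')
    (w : G.Walk r r') :
    ∃ s ∈ R, ∃ (w1 : G.Walk r s) (w2 : G.Walk s r'),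
      w1.length + w2.length = w.length ∧ 0 < w1.length ∧
      (∀ x ∈ w1.support, x ∈ R → x = r ∨ x = s) := by
  induction w with
  | nil => exact absurd rfl hne
  | @cons a b c hab p ih =>
      by_cases hb : b ∈ R
      · refine ⟨b, hb, Walk.cons hab Walk.nil, p, by simp [Nat.add_comm], by simp, ?_⟩
        intro x hx _
        simp at hx
        tauto
      · have hbc : b ≠ c := fun h => hb (h ▸ hr')
        obtain ⟨s, hs, w1, w2, hlen, hpos, hsup⟩ := ih hr' hbc
        refine ⟨s, hs, Walk.cons hab w1, w2, by simp; omega, by simp, ?_⟩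
        intro x hx hxR
        rcases (Walk.mem_support_iff _).mp hx with h | h
        · exact Or.inl h
        · rcases hsup x ((by simpa using h)) hxR with h' | h'
          · exact absurd (h' ▸ hxR) hb
          · exact Or.inr h'

lemma upper (G : SimpleGraph V) (R : Set V) :
    ∀ n : ℕ, ∀ r r' : V, r ∈ R → r' ∈ R →
      ∀ w : G.Walk r r', w.length = G.dist r r' → w.length = n →
      MWalkLen G R r r' n := by
  intro n
  induction n using Nat.strong_induction_on with
  | _ n ih =>
    intro r r' hr hr' w hwd hwn
    by_cases hne : r = r'
    · subst hne
      have : G.dist r r = 0 := by simp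
      have hn0 : n = 0 := by omega
      exact hn0 ▸ MWalkLen.nil r
    · obtain ⟨s, hs, w1, w2, hlen, hpos, hsup⟩ := split G R hr' hne w
      have h1 : G.dist r s ≤ w1.length := G.dist_le w1
      have h2 : G.dist s r' ≤ w2.length := G.dist_le w2
      have htri : G.dist r r' ≤ G.dist r s + G.dist s r' := by
        have hr1 : G.Reachable r s := w1.reachable
        have hr2 : G.Reachable s r' := w2.reachable
        obtain ⟨p1, hp1⟩ := hr1.exists_walk_length_eq_dist
        obtain ⟨p2, hp2⟩ := hr2.exists_walk_length_eq_dist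
        calc G.dist r r' ≤ (p1.append p2).length := G.dist_le _
        _ = _ := by simp [hp1, hp2]
      have he1 : G.dist r s = w1.length := by omega
      have he2 : G.dist s r' = w2.length := by omega
      have hrs : r ≠ s := by
        intro h
        subst h
        simp at he1
        omega
      have hedge : MEdge G R r s := ⟨hrs, w1, he1.symm, hsup⟩
      have hih : MWalkLen G R s r' w2.length :=
        ih w2.length (by omega) s r' hs hr' w2 he2.symm rfl
      have := MWalkLen.cons hedge hih
      rw [he1] at this
      have hn : w1.length + w2.length = n := by omega
      exact hn ▸ this

/-- for landmarks `r, r'`, the meta-graph distance equals the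
distance in the original graph. -/
theorem dM_eq_dist (G : SimpleGraph V) (hG : G.Connected) (R : Set V)
    (r r' : V) (hr : r ∈ R) (hr' : r' ∈ R) :
    dM G R r r' = (G.dist r r' : ℕ∞) := by
  apply le_antisymm
  · obtain ⟨w, hw⟩ := hG.exists_walk_length_eq_dist r r'
    exact sInf_le ⟨G.dist r r', upper G R _ r r' hr hr' w hw hw, rfl⟩
  · apply le_sInf
    rintro x ⟨n, hwalk, rfl⟩
    exact_mod_cast lower G hG R hwalk
end

section
/- If u and v are vertices such that at least one shortest u-v path in G passes through some landmark, then the sketch upper bound equals the true distance: d⊤_uv = d_G(u,v), where d⊤_uv = min{δ_ur + d_M(r,r') + δ_vr' : (r,δ_ur) ∈ L(u), (r',δ_vr') ∈ L(v)}. -/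
open SimpleGraph

variable {V : Type}

lemma first_landmark (G : SimpleGraph V) (R : Set V) {u v : V} (w : G.Walk u v)
    (h : ∃ x ∈ w.support, x ∈ R) :
    ∃ r ∈ R, ∃ p : G.Walk u r, ∃ q : G.Walk r v,
      p.length + q.length = w.length ∧ ∀ x ∈ p.support, x ∈ R → x = r := by
  induction w with
  | nil =>
    obtain ⟨x, hx, hxR⟩ := h
    simp only [Walk.support_nil, List.mem_singleton] at hx
    subst hx
    exact ⟨x, hxR, Walk.nil, Walk.nil, by simp, by simp⟩
  | @cons a b c e w' ih =>
    by_cases ha : a ∈ R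
    · exact ⟨a, ha, Walk.nil, Walk.cons e w', by simp, by simp⟩
    · have h' : ∃ x ∈ w'.support, x ∈ R := by
        obtain ⟨x, hx, hxR⟩ := h
        rw [Walk.support_cons] at hx
        rcases List.mem_cons.mp hx with rfl | hx
        · exact absurd hxR ha
        · exact ⟨x, hx, hxR⟩
      obtain ⟨r, hr, p, q, hlen, hsup⟩ := ih h'
      refine ⟨r, hr, Walk.cons e p, q, by simp only [Walk.length_cons]; omega, ?_⟩
      intro x hx hxR
      rw [Walk.support_cons] at hx
      rcases List.mem_cons.mp hx with rfl | hx
      · exact absurd hxR ha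
      · exact hsup x hx hxR

lemma split_shortest (G : SimpleGraph V) (hG : G.Connected) {u r v : V}
    (p : G.Walk u r) (q : G.Walk r v) (h : p.length + q.length = G.dist u v) :
    p.length = G.dist u r ∧ q.length = G.dist r v := by
  have h1 := SimpleGraph.dist_le p
  have h2 := SimpleGraph.dist_le q
  have h3 := hG.dist_triangle (u := u) (v := r) (w := v)
  omega

lemma mwalk_of_shortest (G : SimpleGraph V) (hG : G.Connected) (R : Set V) :
    ∀ n {r v : V}, r ∈ R → v ∈ R → ∀ q : G.Walk r v, q.length = n →
      q.length = G.dist r v → MWalkLen G R r v n := by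
  intro n
  induction n using Nat.strong_induction_on with
  | _ n ih =>
    intro r v hr hv q hn hdist
    cases q with
    | nil =>
      simp only [Walk.length_nil] at hn
      subst hn
      exact MWalkLen.nil r
    | @cons _ b _ e q' =>
      have h' : ∃ x ∈ q'.support, x ∈ R := ⟨v, Walk.end_mem_support q', hv⟩
      obtain ⟨r₁, hr₁, p', q₁, hlen, hsup⟩ := first_landmark G R q' h'
      set s : G.Walk r r₁ := Walk.cons e p' with hs_def
      have hslen : s.length = p'.length + 1 := by simp [hs_def]
      have hsum : s.length + q₁.length = G.dist r v := by
        rw [hslen]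
        simp only [Walk.length_cons] at hdist
        omega
      obtain ⟨hs, hq₁⟩ := split_shortest G hG s q₁ hsum
      have hne : r ≠ r₁ := by
        rintro rfl
        rw [SimpleGraph.dist_self] at hs
        omega
      have hedge : MEdge G R r r₁ := by
        refine ⟨hne, s, hs, ?_⟩
        intro x hx hxR
        rw [hs_def, Walk.support_cons] at hx
        rcases List.mem_cons.mp hx with rfl | hx
        · exact Or.inl rfl
        · exact Or.inr (hsup x hx hxR)
      have hlt : q₁.length < n := by
        simp only [Walk.length_cons] at hn
        omega
      have hmw := ih q₁.length hlt hr₁ hv q₁ rfl hq₁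
      have := MWalkLen.cons hedge hmw
      rw [← hs] at this
      have hn' : s.length + q₁.length = n := by
        simp only [Walk.length_cons] at hn
        rw [hslen]; omega
      rwa [hn'] at this

lemma mwalk_ge_dist (G : SimpleGraph V) (hG : G.Connected) (R : Set V)
    {r v : V} {n : ℕ} (h : MWalkLen G R r v n) : G.dist r v ≤ n := by
  induction h with
  | nil => simp
  | @cons a b c m e hw ih =>
    have := hG.dist_triangle (u := a) (v := b) (w := c)
    omega

/-- if some shortest `u`-`v` path passes through a landmark, then
the sketch upper bound equals the true distance. -/
theorem dTop_eq_dist_of_covered (G : SimpleGraph V) (hG : G.Connected)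
    (R : Set V) (u v : V) (hu : u ∉ R) (hv : v ∉ R)
    (h : ∃ w : G.Walk u v, w.length = G.dist u v ∧ ∃ x ∈ w.support, x ∈ R) :
    dTop G R u v = (G.dist u v : ℕ∞) := by
  obtain ⟨w, hw, hx⟩ := h
  obtain ⟨r, hr, p, q, hlen, hsup⟩ := first_landmark G R w hx
  rw [hw] at hlen
  obtain ⟨hp, hq⟩ := split_shortest G hG p q hlen
  -- find last landmark via q.reverse
  have hrev : ∃ x ∈ q.reverse.support, x ∈ R := by
    refine ⟨r, ?_, hr⟩
    rw [Walk.support_reverse]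
    exact List.mem_reverse.mpr (Walk.start_mem_support q)
  obtain ⟨r', hr', p₂, q₂, hlen₂, hsup₂⟩ := first_landmark G R q.reverse hrev
  rw [Walk.length_reverse, hq] at hlen₂
  have hqvr : p₂.length + q₂.length = G.dist v r := by
    rw [hlen₂, SimpleGraph.dist_comm]
  obtain ⟨hp₂, hq₂⟩ := split_shortest G hG p₂ q₂ hqvr
  -- middle meta-walk
  have hmidlen : q₂.reverse.length = G.dist r r' := by
    rw [Walk.length_reverse, hq₂, SimpleGraph.dist_comm]
  have hmw : MWalkLen G R r r' q₂.reverse.length :=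
    mwalk_of_shortest G hG R q₂.reverse.length hr hr' q₂.reverse rfl hmidlen
  -- dM r r' = dist r r'
  have hdM : dM G R r r' = (G.dist r r' : ℕ∞) := by
    apply le_antisymm
    · apply sInf_le
      exact ⟨q₂.reverse.length, hmw, by rw [hmidlen]⟩
    · apply le_sInf
      rintro x ⟨n, hn, rfl⟩
      exact_mod_cast mwalk_ge_dist G hG R hn
  have hLu : LEntry G R u r := ⟨p, hp, hsup⟩
  have hLv : LEntry G R v r' := ⟨p₂, hp₂, hsup₂⟩
  have hval : (G.dist u r : ℕ∞) + dM G R r r' + (G.dist v r' : ℕ∞)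
      = (G.dist u v : ℕ∞) := by
    rw [hdM]
    have : G.dist u r + G.dist r r' + G.dist v r' = G.dist u v := by
      have e1 : G.dist r r' = q₂.length := by rw [hq₂, SimpleGraph.dist_comm]
      omega
    exact_mod_cast this
  apply le_antisymm
  · calc dTop G R u v ≤ (G.dist u r : ℕ∞) + dM G R r r' + (G.dist v r' : ℕ∞) :=
          sInf_le ⟨r, r', hr, hr', hLu, hLv, rfl⟩
      _ = (G.dist u v : ℕ∞) := hval
  · apply le_sInf
    rintro x ⟨s, s', hs, hs', hLs, hLs', rfl⟩
    have hdMlb : (G.dist s s' : ℕ∞) ≤ dM G R s s' := by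
      apply le_sInf
      rintro y ⟨n, hn, rfl⟩
      exact_mod_cast mwalk_ge_dist G hG R hn
    have htri : G.dist u v ≤ G.dist u s + G.dist s s' + G.dist v s' := by
      have t1 := hG.dist_triangle (u := u) (v := s) (w := v)
      have t2 := hG.dist_triangle (u := s) (v := s') (w := v)
      have t3 : G.dist s' v = G.dist v s' := SimpleGraph.dist_comm ..
      omega
    calc (G.dist u v : ℕ∞) ≤ (G.dist u s : ℕ∞) + (G.dist s s' : ℕ∞) + (G.dist v s' : ℕ∞) := by
          exact_mod_cast htri
      _ ≤ (G.dist u s : ℕ∞) + dM G R s s' + (G.dist v s' : ℕ∞) := by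
          gcongr
end

section
/- For any two vertices u, v ∈ V\R, the distance in G satisfies d_G(u,v) = min(d_{G⁻}(u,v), d⊤_uv), where G⁻ = G[V\R] is the graph with all landmarks removed and d⊤_uv is the sketch upper bound. -/
open SimpleGraph

variable {V : Type}

private lemma MWalkLen.append' {G : SimpleGraph V} {R : Set V} {a b c : V} {m k : ℕ}
    (h1 : MWalkLen G R a b m) (h2 : MWalkLen G R b c k) : MWalkLen G R a c (m + k) := by
  induction h1 with
  | nil r => simpa using h2
  | cons h hw ih => rw [add_assoc]; exact MWalkLen.cons h (ih h2)

private lemma MWalkLen.dist_le' {G : SimpleGraph V} (hG : G.Connected) {R : Set V} {a b : V}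
    {n : ℕ} (h : MWalkLen G R a b n) : G.dist a b ≤ n := by
  induction h with
  | nil r => simp
  | @cons r r' r'' n h hw ih =>
      calc G.dist r r'' ≤ G.dist r r' + G.dist r' r'' := hG.dist_triangle
        _ ≤ G.dist r r' + n := by omega

private lemma walk_induce {G : SimpleGraph V} {s : Set V} :
    ∀ {a b : V} (w : G.Walk a b) (hs : ∀ x ∈ w.support, x ∈ s),
      ∃ w' : (G.induce s).Walk ⟨a, hs a w.start_mem_support⟩ ⟨b, hs b w.end_mem_support⟩,
        w'.length = w.length := by
  intro a b w
  induction w with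
  | nil => intro _; exact ⟨Walk.nil, rfl⟩
  | @cons a c b h p ih =>
      intro hs
      have hs' : ∀ x ∈ p.support, x ∈ s := fun x hx => hs x (by simp [hx])
      obtain ⟨w', hw'⟩ := ih hs'
      exact ⟨Walk.cons (by exact h) w', by show w'.length + 1 = p.length + 1; rw [hw']⟩

private lemma exists_first_landmark {G : SimpleGraph V} {R : Set V} :
    ∀ {u v : V} (w : G.Walk u v), u ∉ R → (∃ x ∈ w.support, x ∈ R) →
      ∃ r ∈ R, ∃ (w1 : G.Walk u r) (w2 : G.Walk r v),
        w1.length + w2.length = w.length ∧ ∀ x ∈ w1.support, x ∈ R → x = r := by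
  intro u v w
  induction w with
  | nil =>
      intro hu hx
      obtain ⟨x, hx1, hx2⟩ := hx
      simp at hx1; subst hx1; exact absurd hx2 hu
  | @cons a c b h p ih =>
      intro hu hx
      by_cases hc : c ∈ R
      · refine ⟨c, hc, Walk.cons h Walk.nil, p, by simp [Nat.add_comm], ?_⟩
        intro x hx' hxR
        simp at hx'
        rcases hx' with rfl | rfl
        · exact absurd hxR hu
        · rfl
      · have hx' : ∃ x ∈ p.support, x ∈ R := by
          obtain ⟨x, hx1, hx2⟩ := hx
          simp at hx1
          rcases hx1 with rfl | hx1
          · exact absurd hx2 hu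
          · exact ⟨x, hx1, hx2⟩
        obtain ⟨r, hrR, w1, w2, hlen, hsup⟩ := ih hc hx'
        refine ⟨r, hrR, Walk.cons h w1, w2, by simp [← hlen]; omega, ?_⟩
        intro x hx1 hxR
        simp at hx1
        rcases hx1 with rfl | hx1
        · exact absurd hxR hu
        · exact hsup x hx1 hxR

private lemma exists_mwalk {G : SimpleGraph V} (hG : G.Connected) (R : Set V) :
    ∀ (fuel : ℕ) {r r' : V} (w : G.Walk r r'), w.length = G.dist r r' → w.length ≤ fuel →
      ∃ m, MWalkLen G R r r' m ∧ m ≤ w.length := by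
  classical
  intro fuel
  induction fuel with
  | zero =>
      intro r r' w hw hle
      have h0 : G.dist r r' = 0 := by omega
      have hrr : r = r' := (hG.dist_eq_zero_iff).mp h0
      subst hrr
      exact ⟨0, MWalkLen.nil r, by omega⟩
  | succ fuel ih =>
      intro r r' w hw hle
      by_cases hrr : r = r'
      · subst hrr
        exact ⟨0, MWalkLen.nil r, by omega⟩
      by_cases hmid : ∃ x ∈ w.support, x ∈ R ∧ x ≠ r ∧ x ≠ r'
      · obtain ⟨x, hxs, hxR, hxr, hxr'⟩ := hmid
        have hsum : (w.takeUntil x hxs).length + (w.dropUntil x hxs).length = w.length := by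
          have h := congrArg Walk.length (w.take_spec hxs)
          rwa [Walk.length_append] at h
        have h1 := SimpleGraph.dist_le (w.takeUntil x hxs)
        have h2 := SimpleGraph.dist_le (w.dropUntil x hxs)
        have htri : G.dist r r' ≤ G.dist r x + G.dist x r' := hG.dist_triangle
        have e1 : (w.takeUntil x hxs).length = G.dist r x := by omega
        have e2 : (w.dropUntil x hxs).length = G.dist x r' := by omega
        have p1 : 1 ≤ G.dist r x := by
          rcases Nat.eq_zero_or_pos (G.dist r x) with h0 | h0
          · exact absurd ((hG.dist_eq_zero_iff).mp h0).symm hxr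
          · omega
        have p2 : 1 ≤ G.dist x r' := by
          rcases Nat.eq_zero_or_pos (G.dist x r') with h0 | h0
          · exact absurd ((hG.dist_eq_zero_iff).mp h0) hxr'
          · omega
        obtain ⟨m1, hm1, hb1⟩ := ih (w.takeUntil x hxs) e1 (by omega)
        obtain ⟨m2, hm2, hb2⟩ := ih (w.dropUntil x hxs) e2 (by omega)
        exact ⟨m1 + m2, hm1.append' hm2, by omega⟩
      · have hsup : ∀ x ∈ w.support, x ∈ R → x = r ∨ x = r' := by
          intro x hx hxR
          by_contra hc
          push_neg at hc
          exact hmid ⟨x, hx, hxR, hc.1, hc.2⟩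
        have hedge : MEdge G R r r' := ⟨hrr, w, hw, hsup⟩
        have hmw : MWalkLen G R r r' (G.dist r r' + 0) :=
          MWalkLen.cons hedge (MWalkLen.nil r')
        exact ⟨G.dist r r' + 0, hmw, by omega⟩

private lemma coe_dist_le_dM {G : SimpleGraph V} (hG : G.Connected) (R : Set V) (r r' : V) :
    (G.dist r r' : ℕ∞) ≤ dM G R r r' := by
  refine le_sInf ?_
  rintro x ⟨n, hn, rfl⟩
  exact_mod_cast hn.dist_le' hG

/-- `d_G(u,v) = min(d_{G⁻}(u,v), d⊤_uv)` where `G⁻ = G[V \ R]`. -/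
theorem dist_eq_min_dMinus_dTop (G : SimpleGraph V) (hG : G.Connected)
    (R : Set V) (u v : V) (hu : u ∉ R) (hv : v ∉ R) :
    (G.dist u v : ℕ∞) =
      min ((G.induce {x | x ∉ R}).edist ⟨u, hu⟩ ⟨v, hv⟩) (dTop G R u v) := by
  obtain ⟨w, hwlen⟩ := hG.exists_walk_length_eq_dist u v
  refine le_antisymm (le_min ?_ ?_) ?_
  · by_cases htop : (G.induce {x | x ∉ R}).edist ⟨u, hu⟩ ⟨v, hv⟩ = ⊤
    · simp [htop]
    · obtain ⟨p, hp⟩ := (SimpleGraph.reachable_of_edist_ne_top htop).exists_walk_length_eq_edist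
      rw [← hp]
      have hmap := SimpleGraph.dist_le
        (p.map (SimpleGraph.Embedding.induce {x | x ∉ R}).toHom)
      rw [Walk.length_map] at hmap
      exact_mod_cast hmap
  · refine le_sInf ?_
    rintro x ⟨r, r', hr, hr', hLu, hLv, rfl⟩
    have htri : G.dist u v ≤ G.dist u r + G.dist r r' + G.dist v r' := by
      have t1 : G.dist u v ≤ G.dist u r + G.dist r v := hG.dist_triangle
      have t2 : G.dist r v ≤ G.dist r r' + G.dist r' v := hG.dist_triangle
      have hc : G.dist r' v = G.dist v r' := SimpleGraph.dist_comm
      omega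
    calc (G.dist u v : ℕ∞) ≤ (G.dist u r : ℕ∞) + (G.dist r r' : ℕ∞) + (G.dist v r' : ℕ∞) := by
          exact_mod_cast htri
      _ ≤ (G.dist u r : ℕ∞) + dM G R r r' + (G.dist v r' : ℕ∞) := by
          gcongr
          exact coe_dist_le_dM hG R r r'
  · by_cases hR : ∃ x ∈ w.support, x ∈ R
    · obtain ⟨r, hrR, w1, w2, hlen12, hsup1⟩ := exists_first_landmark w hu hR
      have hrmem : ∃ x ∈ w2.reverse.support, x ∈ R :=
        ⟨r, w2.reverse.end_mem_support, hrR⟩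
      obtain ⟨r', hr'R, w3, w4, hlen34, hsup3⟩ := exists_first_landmark w2.reverse hv hrmem
      have hlen2 : w3.length + w4.length = w2.length := by
        simpa [Walk.length_reverse] using hlen34
      have h1 := SimpleGraph.dist_le w1
      have h3 := SimpleGraph.dist_le w3
      have h4 := SimpleGraph.dist_le w4.reverse
      have hlr : w4.reverse.length = w4.length := Walk.length_reverse _
      have htri : G.dist u v ≤ G.dist u r + G.dist r r' + G.dist v r' := by
        have t1 : G.dist u v ≤ G.dist u r + G.dist r v := hG.dist_triangle
        have t2 : G.dist r v ≤ G.dist r r' + G.dist r' v := hG.dist_triangle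
        have hc : G.dist r' v = G.dist v r' := SimpleGraph.dist_comm
        omega
      have e1 : w1.length = G.dist u r := by omega
      have e3 : w3.length = G.dist v r' := by omega
      have e4 : w4.reverse.length = G.dist r r' := by omega
      obtain ⟨m, hm, hmle⟩ := exists_mwalk hG R w4.reverse.length w4.reverse e4 le_rfl
      have hdM : dM G R r r' ≤ (m : ℕ∞) := sInf_le ⟨m, hm, rfl⟩
      have hL1 : LEntry G R u r := ⟨w1, e1, hsup1⟩
      have hL3 : LEntry G R v r' := ⟨w3, e3, hsup3⟩
      refine min_le_of_right_le (le_trans (sInf_le ⟨r, r', hrR, hr'R, hL1, hL3, rfl⟩) ?_)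
      calc (G.dist u r : ℕ∞) + dM G R r r' + (G.dist v r' : ℕ∞)
          ≤ (G.dist u r : ℕ∞) + (m : ℕ∞) + (G.dist v r' : ℕ∞) := by gcongr
        _ ≤ (G.dist u v : ℕ∞) := by
            have : G.dist u r + m + G.dist v r' ≤ G.dist u v := by omega
            exact_mod_cast this
    · have hsup : ∀ x ∈ w.support, x ∈ {x | x ∉ R} := by
        intro x hx hxR
        exact hR ⟨x, hx, hxR⟩
      obtain ⟨w', hw'⟩ := walk_induce w hsup
      refine min_le_of_left_le ?_
      have := SimpleGraph.edist_le w'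
      rw [hw', hwlen] at this
      exact this
end

section
/- If p is a shortest u-v path in G that passes through at least one landmark, let r be the landmark on p closest to u and r' the landmark on p closest to v (possibly r = r'). Then (r, d_G(u,r)) ∈ L(u), (r', d_G(v,r')) ∈ L(v), and d_G(u,r) + d_G(r,r') + d_G(r',v) = d_G(u,v). -/
open SimpleGraph

variable {V : Type}

/-- if `p` is a shortest `u`-`v` path, `r` is the landmark on `p`
closest to `u` and `r'` the landmark on `p` closest to `v`, then
`(r, d_G(u,r)) ∈ L(u)`, `(r', d_G(v,r')) ∈ L(v)`, and
`d_G(u,r) + d_G(r,r') + d_G(r',v) = d_G(u,v)`. -/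
theorem label_entries_from_shortest_path [DecidableEq V] (G : SimpleGraph V) (hG : G.Connected)
    (R : Set V) (u v : V) (hu : u ∉ R) (hv : v ∉ R)
    (p : G.Walk u v) (hp : p.length = G.dist u v)
    (r r' : V) (hr : r ∈ R) (hr' : r' ∈ R)
    (hrp : r ∈ p.support) (hr'p : r' ∈ p.reverse.support)
    (hclose : ∀ x ∈ (p.takeUntil r hrp).support, x ∈ R → x = r)
    (hclose' : ∀ x ∈ (p.reverse.takeUntil r' hr'p).support, x ∈ R → x = r') :
    LEntry G R u r ∧ LEntry G R v r' ∧
      G.dist u r + G.dist r r' + G.dist r' v = G.dist u v := by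
  classical
  set t := p.takeUntil r hrp with ht
  set q := p.dropUntil r hrp with hq
  have hsplit : t.append q = p := p.take_spec hrp
  have hlen : t.length + q.length = p.length := by
    rw [← hsplit, Walk.length_append]
  have hd1 : G.dist u r ≤ t.length := G.dist_le t
  have hd2 : G.dist r v ≤ q.length := G.dist_le q
  have htri : G.dist u v ≤ G.dist u r + G.dist r v := hG.dist_triangle
  have htlen : t.length = G.dist u r := by omega
  -- reverse side
  set rt := p.reverse.takeUntil r' hr'p with hrt
  set rq := p.reverse.dropUntil r' hr'p with hrq
  have hrsplit : rt.append rq = p.reverse := p.reverse.take_spec hr'p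
  have hrlen : rt.length + rq.length = p.length := by
    rw [← Walk.length_reverse p, ← hrsplit, Walk.length_append]
  have hrd1 : G.dist v r' ≤ rt.length := G.dist_le rt
  have hrd2 : G.dist r' u ≤ rq.length := G.dist_le rq
  have hrtri : G.dist v u ≤ G.dist v r' + G.dist r' u := hG.dist_triangle
  have hcomm : G.dist v u = G.dist u v := G.dist_comm
  have hrtlen : rt.length = G.dist v r' := by omega
  refine ⟨⟨t, htlen, hclose⟩, ⟨rt, hrtlen, hclose'⟩, ?_⟩
  by_cases hrr : r = r'
  · subst hrr
    have h0 : G.dist r r = 0 := G.dist_self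
    omega
  · have hr'q : r' ∈ q.support := by
      have hps : r' ∈ p.support := by
        rw [Walk.support_reverse] at hr'p
        exact List.mem_reverse.mp hr'p
      rw [← hsplit, Walk.mem_support_append_iff] at hps
      rcases hps with h1 | h2
      · exact absurd (hclose r' h1 hr') (fun e => hrr e.symm)
      · exact h2
    set q2 := q.takeUntil r' hr'q with hq2
    set q3 := q.dropUntil r' hr'q with hq3
    have hqsplit : q2.append q3 = q := q.take_spec hr'q
    have hqlen : q2.length + q3.length = q.length := by
      rw [← hqsplit, Walk.length_append]
    have hd3 : G.dist r r' ≤ q2.length := G.dist_le q2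
    have hd4 : G.dist r' v ≤ q3.length := G.dist_le q3
    have htriA := @SimpleGraph.Connected.dist_triangle V G u r v hG
    have htriB := @SimpleGraph.Connected.dist_triangle V G r r' v hG
    omega
end

section
/- If p is a shortest path between landmarks r and r' in G, and r = s_0, s_1, ..., s_k = r' are the landmarks on p listed in order of their occurrence along p, then each consecutive pair (s_i, s_{i+1}) is an edge of the meta-graph M, and the weights satisfy σ(s_0,s_1) + ... + σ(s_{k-1},s_k) = d_G(r,r'). Consequently d_M(r,r') ≤ d_G(r,r'). -/
open SimpleGraph

variable {V : Type}

private lemma split_shortest_s11 [DecidableEq V] (G : SimpleGraph V) (hG : G.Connected) {a b : V}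
    (p : G.Walk a b) (hlen : p.length = G.dist a b) {c : V} (hc : c ∈ p.support) :
    G.dist a c + G.dist c b = p.length := by
  have hspec := congrArg SimpleGraph.Walk.length (p.take_spec hc)
  rw [SimpleGraph.Walk.length_append] at hspec
  have h1 : G.dist a c ≤ (p.takeUntil c hc).length := G.dist_le _
  have h2 : G.dist c b ≤ (p.dropUntil c hc).length := G.dist_le _
  have h3 : G.dist a b ≤ G.dist a c + G.dist c b := hG.dist_triangle
  omega

private lemma meta_aux (G : SimpleGraph V) (hG : G.Connected) (R : Set V)
    [DecidablePred (· ∈ R)] [DecidableEq V] {b : V} :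
    ∀ {a : V} (p : G.Walk a b), b ∈ R → p.IsPath → p.length = G.dist a b →
      (a :: p.support.tail.filter (· ∈ R)).getLast? = some b ∧
      (∀ s ∈ (a :: p.support.tail.filter (· ∈ R)).zip (p.support.tail.filter (· ∈ R)),
          MEdge G R s.1 s.2) ∧
      (((a :: p.support.tail.filter (· ∈ R)).zip (p.support.tail.filter (· ∈ R))).map
          (fun s => G.dist s.1 s.2)).sum = p.length := by
  intro a p
  induction p with
  | nil => intro _ _ _; simp
  | @cons a a' b h q ih =>
    intro hb hp hlen
    have hp' : q.IsPath := hp.of_cons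
    have hlc : (SimpleGraph.Walk.cons h q).length = q.length + 1 :=
      SimpleGraph.Walk.length_cons h q
    have hql : q.length = G.dist a' b := by
      have h1 : G.dist a' b ≤ q.length := G.dist_le q
      have h2 : G.dist a b ≤ G.dist a a' + G.dist a' b := hG.dist_triangle
      have h3 : G.dist a a' ≤ 1 := by simpa using G.dist_le h.toWalk
      omega
    obtain ⟨ihl, ih1, ih2⟩ := ih hb hp' hql
    have hsup : (SimpleGraph.Walk.cons h q).support.tail = a' :: q.support.tail := by
      rw [SimpleGraph.Walk.support_cons, List.tail_cons]
      exact q.support_eq_cons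
    rw [hsup]
    by_cases ha' : a' ∈ R
    · rw [List.filter_cons_of_pos (by simpa using ha')]
      have hd1 : G.dist a a' = 1 := SimpleGraph.dist_eq_one_iff_adj.mpr h
      have hme : MEdge G R a a' := by
        refine ⟨h.ne, h.toWalk, by simpa using hd1.symm, ?_⟩
        intro x hx _
        simp only [SimpleGraph.Adj.toWalk, SimpleGraph.Walk.support_cons,
          SimpleGraph.Walk.support_nil, List.mem_cons, List.mem_singleton] at hx
        tauto
      refine ⟨by rw [List.getLast?_cons_cons]; exact ihl, ?_, ?_⟩
      · intro s hs
        rw [List.zip_cons_cons, List.mem_cons] at hs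
        rcases hs with rfl | hs
        · exact hme
        · exact ih1 s hs
      · rw [List.zip_cons_cons, List.map_cons, List.sum_cons, ih2, hd1]
        omega
    · rw [List.filter_cons_of_neg (by simpa using ha')]
      -- the filtered list is nonempty since b is in it
      have hbmem : b ∈ q.support.tail.filter (· ∈ R) := by
        have hb1 : b ∈ q.support := q.end_mem_support
        rw [q.support_eq_cons, List.mem_cons] at hb1
        rcases hb1 with rfl | hb1
        · exact absurd hb ha'
        · exact List.mem_filter.mpr ⟨hb1, by simpa using hb⟩
      obtain ⟨s₁, t', ht⟩ := List.exists_cons_of_ne_nil (List.ne_nil_of_mem hbmem)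
      rw [ht] at ihl ih1 ih2 ⊢
      have hsq : s₁ ∈ q.support := by
        have : s₁ ∈ q.support.tail := by
          have : s₁ ∈ q.support.tail.filter (· ∈ R) := by rw [ht]; exact List.mem_cons_self
          exact List.mem_of_mem_filter this
        rw [q.support_eq_cons]; exact List.mem_cons_of_mem _ this
      have hsp : s₁ ∈ (SimpleGraph.Walk.cons h q).support := by
        rw [SimpleGraph.Walk.support_cons]; exact List.mem_cons_of_mem _ hsq
      have e1 := split_shortest_s11 G hG (SimpleGraph.Walk.cons h q) hlen hsp
      have e2 := split_shortest_s11 G hG q hql hsq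
      have hd : G.dist a s₁ = 1 + G.dist a' s₁ := by omega
      have hme' : MEdge G R a' s₁ := by
        refine ih1 (a', s₁) ?_
        rw [List.zip_cons_cons, List.mem_cons]; left; rfl
      have hme : MEdge G R a s₁ := by
        obtain ⟨hne', w, hwlen, hwsup⟩ := hme'
        refine ⟨?_, SimpleGraph.Walk.cons h w, ?_, ?_⟩
        · intro heq
          rw [heq, G.dist_self] at hd
          omega
        · rw [SimpleGraph.Walk.length_cons, hwlen]; omega
        · intro x hx hxR
          rw [SimpleGraph.Walk.support_cons, List.mem_cons] at hx
          rcases hx with rfl | hx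
          · exact Or.inl rfl
          · rcases hwsup x hx hxR with rfl | rfl
            · exact absurd hxR ha'
            · exact Or.inr rfl
      refine ⟨by rw [List.getLast?_cons_cons] at ihl ⊢; exact ihl, ?_, ?_⟩
      · intro s hs
        rw [List.zip_cons_cons, List.mem_cons] at hs
        rcases hs with rfl | hs
        · exact hme
        · refine ih1 s ?_
          rw [List.zip_cons_cons, List.mem_cons]; exact Or.inr hs
      · rw [List.zip_cons_cons, List.map_cons, List.sum_cons] at ih2 ⊢
        dsimp only at ih2 ⊢
        omega

private lemma mwalk_of_list (G : SimpleGraph V) (R : Set V) :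
    ∀ (l : List V) (a b : V), l.head? = some a → l.getLast? = some b →
      (∀ s ∈ l.zip l.tail, MEdge G R s.1 s.2) →
      MWalkLen G R a b ((l.zip l.tail).map (fun s => G.dist s.1 s.2)).sum := by
  intro l
  induction l with
  | nil => intro a b hh; simp at hh
  | cons a' l' ih =>
    intro a b hh hl hme
    rw [List.head?_cons, Option.some_inj] at hh
    subst hh
    rcases l' with _ | ⟨c, l''⟩
    · simp only [List.getLast?_singleton, Option.some_inj] at hl
      subst hl
      simpa using MWalkLen.nil (G := G) (R := R) a'
    · rw [List.getLast?_cons_cons] at hl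
      have hw := ih c b rfl hl (fun s hs => hme s (by
        rw [List.tail_cons, List.zip_cons_cons, List.mem_cons]; exact Or.inr hs))
      have hhd : MEdge G R a' c := hme (a', c) (by
        rw [List.tail_cons, List.zip_cons_cons, List.mem_cons]; left; rfl)
      rw [List.tail_cons, List.zip_cons_cons, List.map_cons, List.sum_cons]
      exact MWalkLen.cons hhd hw

/-- if `p` is a shortest path between landmarks `r, r'`, and
`l = r = s₀, s₁, …, s_k = r'` is the list of landmarks on `p` in order of
occurrence, then every consecutive pair is a meta-graph edge, the weights
`d_G(sᵢ, sᵢ₊₁)` sum to `d_G(r,r')`, and consequently `d_M(r,r') ≤ d_G(r,r')`. -/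
theorem meta_path_along_shortest (G : SimpleGraph V) (hG : G.Connected)
    (R : Set V) [DecidablePred (· ∈ R)] (r r' : V) (hr : r ∈ R) (hr' : r' ∈ R)
    (p : G.Walk r r') (hp : p.IsPath) (hlen : p.length = G.dist r r') :
    (∀ s ∈ (p.support.filter (· ∈ R)).zip (p.support.filter (· ∈ R)).tail,
        MEdge G R s.1 s.2) ∧
    (((p.support.filter (· ∈ R)).zip (p.support.filter (· ∈ R)).tail).map
        (fun s => G.dist s.1 s.2)).sum = G.dist r r' ∧
    dM G R r r' ≤ (G.dist r r' : ℕ∞) := by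
  have hfil : p.support.filter (· ∈ R) = r :: p.support.tail.filter (· ∈ R) := by
    conv_lhs => rw [p.support_eq_cons]
    rw [List.filter_cons_of_pos (by simpa using hr)]
  classical
  obtain ⟨h0, h1, h2⟩ := meta_aux G hG R p hr' hp hlen
  rw [hfil, List.tail_cons]
  refine ⟨h1, by rw [h2, hlen], ?_⟩
  have hw := mwalk_of_list G R (r :: p.support.tail.filter (· ∈ R)) r r' rfl h0 h1
  rw [List.tail_cons, h2, hlen] at hw
  exact sInf_le ⟨G.dist r r', hw, rfl⟩
end
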